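/- arXiv:1207.4545 — 7 statements merged into one kernel-verified Lean document; each statement's English description precedes it below -/
import Mathlib

section
/- For every positive integer n and every complex number x, the product ∏_{k=0}^{n-1} ( e^{i(x + kπ/n)} + e^{-i(x + kπ/n)} ) equals e^{iπ(n-1)/2} · ( e^{inx} + (-1)^{n-1} e^{-inx} ). -/
open Finset Complex

lemma gauss_sum_complex (n : ℕ) : (∑ k ∈ Finset.range n, (k : ℂ)) = n * (n - 1) / 2 := by
  induction n with
  | zero => simp
  | succ m ih => rw [Finset.sum_range_succ, ih]; push_cast; ring

lemma prod_one_add_mul_pow {n : ℕ} (hn : 0 < n) {ζ : ℂ} (h : IsPrimitiveRoot ζ n) (w : ℂ) :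
    ∏ k ∈ Finset.range n, (1 + w * ζ ^ k) = 1 - (-w) ^ n := by
  have key := h.pow_sub_pow_eq_prod_sub_mul (1 : ℂ) (-w) hn
  rw [one_pow] at key
  rw [key]
  refine (Finset.prod_nbij (s := Finset.range n) (t := Polynomial.nthRootsFinset n (1 : ℂ))
    (f := fun k => 1 + w * ζ ^ k) (g := fun μ => 1 - μ * -w)
    (fun k => ζ ^ k) ?_ ?_ ?_ ?_)
  · intro k _
    rw [Polynomial.mem_nthRootsFinset hn (1 : ℂ), ← pow_mul, mul_comm, pow_mul, h.pow_eq_one, one_pow]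
  · intro a ha b hb hab
    exact h.pow_inj (Finset.mem_range.mp (Finset.mem_coe.mp ha))
      (Finset.mem_range.mp (Finset.mem_coe.mp hb)) hab
  · intro μ hμ
    have : NeZero n := ⟨hn.ne'⟩
    obtain ⟨i, hi, rfl⟩ := h.eq_pow_of_pow_eq_one
      ((Polynomial.mem_nthRootsFinset hn (1 : ℂ)).mp (Finset.mem_coe.mp hμ))
    exact ⟨i, Finset.mem_coe.mpr (Finset.mem_range.mpr hi), rfl⟩
  · intro k _
    ring

/-- For every positive integer `n` and complex `x`,
`∏_{k=0}^{n-1} (e^{i(x + kπ/n)} + e^{-i(x + kπ/n)})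
  = e^{iπ(n-1)/2} · (e^{inx} + (-1)^{n-1} e^{-inx})`. -/
theorem prod_exp_add_exp_neg (n : ℕ) (hn : 0 < n) (x : ℂ) :
    ∏ k ∈ Finset.range n,
      (Complex.exp (Complex.I * (x + (k : ℂ) * (Real.pi : ℂ) / (n : ℂ))) +
        Complex.exp (-(Complex.I * (x + (k : ℂ) * (Real.pi : ℂ) / (n : ℂ))))) =
    Complex.exp (Complex.I * (Real.pi : ℂ) * ((n : ℂ) - 1) / 2) *
      (Complex.exp (Complex.I * (n : ℂ) * x) +
        (-1 : ℂ) ^ (n - 1) * Complex.exp (-(Complex.I * (n : ℂ) * x))) := by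
  have hn0 : (n : ℂ) ≠ 0 := Nat.cast_ne_zero.mpr hn.ne'
  set ζ : ℂ := Complex.exp (-(2 * Real.pi * Complex.I / n)) with hζ
  have hprim : IsPrimitiveRoot ζ n := by
    have := (Complex.isPrimitiveRoot_exp n hn.ne').inv
    rwa [← Complex.exp_neg] at this
  have hfac : ∀ k ∈ Finset.range n,
      (Complex.exp (Complex.I * (x + (k : ℂ) * (Real.pi : ℂ) / (n : ℂ))) +
        Complex.exp (-(Complex.I * (x + (k : ℂ) * (Real.pi : ℂ) / (n : ℂ))))) =
      Complex.exp (Complex.I * (x + (k : ℂ) * (Real.pi : ℂ) / (n : ℂ))) *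
        (1 + Complex.exp (-(2 * Complex.I * x)) * ζ ^ k) := by
    intro k _
    rw [mul_one_add]
    congr 1
    rw [hζ, ← Complex.exp_nat_mul, ← Complex.exp_add, ← Complex.exp_add]
    congr 1
    field_simp
    ring
  rw [Finset.prod_congr rfl hfac, Finset.prod_mul_distrib,
    prod_one_add_mul_pow hn hprim, ← Complex.exp_sum]
  have hsum2 : (∑ k ∈ Finset.range n,
      Complex.I * (x + (k : ℂ) * (Real.pi : ℂ) / (n : ℂ)))
      = Complex.I * (n : ℂ) * x + Complex.I * (Real.pi : ℂ) * ((n : ℂ) - 1) / 2 := by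
    have h1 : ∀ k ∈ Finset.range n,
        Complex.I * (x + (k : ℂ) * (Real.pi : ℂ) / (n : ℂ))
        = Complex.I * x + (k : ℂ) * (Complex.I * (Real.pi : ℂ) / (n : ℂ)) := by
      intro k _; ring
    rw [Finset.sum_congr rfl h1, Finset.sum_add_distrib, Finset.sum_const,
      Finset.card_range, ← Finset.sum_mul, gauss_sum_complex, nsmul_eq_mul]
    field_simp
  rw [hsum2]
  obtain ⟨m, rfl⟩ : ∃ m, n = m + 1 := ⟨n - 1, (Nat.succ_pred_eq_of_pos hn).symm⟩
  have hmul : Complex.exp (Complex.I * ((m + 1 : ℕ) : ℂ) * x) *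
      Complex.exp (((m + 1 : ℕ) : ℂ) * -(2 * Complex.I * x))
      = Complex.exp (-(Complex.I * ((m + 1 : ℕ) : ℂ) * x)) := by
    rw [← Complex.exp_add]; congr 1; ring
  rw [neg_pow, ← Complex.exp_nat_mul, Complex.exp_add, Nat.add_sub_cancel, pow_succ]
  linear_combination ((-1 : ℂ) ^ m *
    Complex.exp (Complex.I * (Real.pi : ℂ) * (((m + 1 : ℕ) : ℂ) - 1) / 2)) * hmul
end

section
/- Let n be an even positive integer and let x be a complex number such that cos(x + kπ/n) ≠ 0 for every integer k with 0 ≤ k ≤ n−1. Then ∑_{k=0}^{n-1} tan(x + kπ/n) = n · tan(nx + π/2). -/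
open Complex Polynomial Finset

/-- Log-derivative of `X^n - 1`: for `a` with `a^n ≠ 1`,
`∑ 1/(a - ζ^k) = n a^(n-1)/(a^n - 1)`. -/
lemma aux_sum_inv_sub_root {n : ℕ} (hn : 0 < n) {ζ : ℂ} (hζ : IsPrimitiveRoot ζ n)
    {a : ℂ} (ha : a ^ n ≠ 1) :
    ∑ k ∈ Finset.range n, (a - ζ ^ k)⁻¹ = n * a ^ (n - 1) / (a ^ n - 1) := by
  have hP : (X : ℂ[X]) ^ n - C 1 = ∏ i ∈ Finset.range n, (X - C (ζ ^ i * 1)) :=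
    X_pow_sub_C_eq_prod hζ hn (one_pow n)
  simp only [mul_one] at hP
  have hfun : ∀ y : ℂ, ∏ k ∈ Finset.range n, (y - ζ ^ k) = y ^ n - 1 := by
    intro y
    have := congrArg (Polynomial.eval y) hP
    simpa [eval_prod] using this.symm
  have hroot : ∀ k, a - ζ ^ k ≠ 0 := by
    intro k h0
    apply ha
    have hak : a = ζ ^ k := by rwa [sub_eq_zero] at h0
    rw [hak, ← pow_mul, mul_comm, pow_mul, hζ.pow_eq_one, one_pow]
  have hprod : ∏ k ∈ Finset.range n, (a - ζ ^ k) = a ^ n - 1 := hfun a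
  have hane : a ^ n - 1 ≠ 0 := sub_ne_zero.mpr ha
  have h1 : HasDerivAt (fun y : ℂ => ∏ k ∈ Finset.range n, (y - ζ ^ k))
      (∑ k ∈ Finset.range n, (∏ j ∈ (Finset.range n).erase k, (a - ζ ^ j)) • (1 : ℂ)) a :=
    HasDerivAt.fun_finsetProd (fun i _ => (hasDerivAt_id a).sub_const _)
  have h2 : HasDerivAt (fun y : ℂ => ∏ k ∈ Finset.range n, (y - ζ ^ k))
      ((n : ℂ) * a ^ (n - 1)) a := by
    have : HasDerivAt (fun y : ℂ => y ^ n - 1) ((n : ℂ) * a ^ (n - 1)) a :=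
      (hasDerivAt_pow n a).sub_const 1
    exact this.congr_of_eventuallyEq (Filter.Eventually.of_forall fun y => hfun y)
  have hder : ∑ k ∈ Finset.range n, ∏ j ∈ (Finset.range n).erase k, (a - ζ ^ j)
      = n * a ^ (n - 1) := by
    have := h1.unique h2
    simpa using this
  have key : ∀ k ∈ Finset.range n,
      (a - ζ ^ k)⁻¹ = (∏ j ∈ (Finset.range n).erase k, (a - ζ ^ j)) / (a ^ n - 1) := by
    intro k hk
    rw [eq_div_iff hane, ← hprod, ← Finset.mul_prod_erase _ _ hk]
    field_simp [hroot k]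
  rw [Finset.sum_congr rfl key, ← Finset.sum_div, hder]

/-- Key rational identity: for `w ≠ 0`, `w^n ≠ 1`, `n` even positive, and `wζ^k ≠ -1`,
`∑ (wζ^k - 1)/(wζ^k + 1) = n (w^n + 1)/(w^n - 1)`. -/
lemma aux_sum_frac {n : ℕ} (hn : 0 < n) (hev : Even n) {ζ w : ℂ}
    (hζ : IsPrimitiveRoot ζ n) (hw : w ≠ 0) (hwn : w ^ n ≠ 1)
    (hne : ∀ k, w * ζ ^ k + 1 ≠ 0) :
    ∑ k ∈ Finset.range n, (w * ζ ^ k - 1) / (w * ζ ^ k + 1)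
      = n * (w ^ n + 1) / (w ^ n - 1) := by
  set a : ℂ := -w⁻¹ with ha
  have hanval : a ^ n = (w ^ n)⁻¹ := by
    rw [ha, hev.neg_pow, inv_pow]
  have han : a ^ n ≠ 1 := by
    rw [hanval]; exact fun hc => hwn (by rwa [inv_eq_one] at hc)
  have hsum := aux_sum_inv_sub_root hn hζ han
  have hterm : ∀ k ∈ Finset.range n,
      (w * ζ ^ k - 1) / (w * ζ ^ k + 1) = 1 - 2 * (-w⁻¹ * (a - ζ ^ k)⁻¹) := by
    intro k _
    have h1 : w * ζ ^ k + 1 = -w * (a - ζ ^ k) := by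
      rw [ha]; field_simp; ring
    have hinv : -w⁻¹ * (a - ζ ^ k)⁻¹ = (w * ζ ^ k + 1)⁻¹ := by
      rw [h1, mul_inv, inv_neg]
    rw [hinv]
    field_simp [hne k]
    ring
  have hodd : Odd (n - 1) := Nat.Even.sub_odd hn hev odd_one
  have hpow : a ^ (n - 1) = -(w ^ (n - 1))⁻¹ := by
    rw [ha, hodd.neg_pow, inv_pow]
  rw [Finset.sum_congr rfl hterm, Finset.sum_sub_distrib, Finset.sum_const,
    Finset.card_range, ← Finset.mul_sum, ← Finset.mul_sum, hsum, hpow, hanval]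
  have hkey : w ^ n = w ^ (n - 1) * w := by
    rw [← pow_succ]; congr 1; omega
  rw [hkey]
  have ht : w ^ (n - 1) ≠ 0 := pow_ne_zero _ hw
  rw [hkey] at hwn
  generalize w ^ (n - 1) = t at ht hwn ⊢
  have h1 : t * w - 1 ≠ 0 := sub_ne_zero.mpr hwn
  have h2 : (t * w)⁻¹ - 1 ≠ 0 := by
    rw [sub_ne_zero]; exact fun hc => hwn (by rwa [inv_eq_one] at hc)
  have h3 : t * w ≠ 0 := mul_ne_zero ht hw
  have h5 : 1 - t * w ≠ 0 := sub_ne_zero.mpr (Ne.symm hwn)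
  have h4 : (t * w)⁻¹ - 1 = (1 - t * w) / (t * w) := by field_simp
  rw [h4]
  have h6 : 1 - w * t ≠ 0 := by rwa [mul_comm]
  have h7 : -1 + w * t ≠ 0 := by rw [mul_comm]; intro hc; exact h1 (by linear_combination hc)
  field_simp
  ring_nf
  field_simp
  ring

/-- `exp(2θi) + 1 = exp(θi) · 2cos θ`. -/
lemma aux_cos (θ : ℂ) : Complex.exp (2 * θ * Complex.I) + 1
    = Complex.exp (θ * Complex.I) * (2 * Complex.cos θ) := by
  have e1 : Complex.exp (2 * θ * Complex.I)
      = Complex.exp (θ * Complex.I) * Complex.exp (θ * Complex.I) := by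
    rw [← Complex.exp_add]; ring_nf
  have e2 : Complex.exp (θ * Complex.I) * Complex.exp (-θ * Complex.I) = 1 := by
    rw [← Complex.exp_add]; simp
  rw [Complex.cos, e1]
  linear_combination -e2

/-- `tan θ` in terms of `exp(2θi)`. -/
lemma aux_tan (θ : ℂ) (hθ : Complex.exp (2 * θ * Complex.I) + 1 ≠ 0) :
    Complex.tan θ = -Complex.I * (Complex.exp (2 * θ * Complex.I) - 1)
      / (Complex.exp (2 * θ * Complex.I) + 1) := by
  have e1 : Complex.exp (2 * θ * Complex.I)
      = Complex.exp (θ * Complex.I) * Complex.exp (θ * Complex.I) := by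
    rw [← Complex.exp_add]; ring_nf
  have e2 : Complex.exp (θ * Complex.I) * Complex.exp (-θ * Complex.I) = 1 := by
    rw [← Complex.exp_add]; simp
  have hcos : Complex.cos θ ≠ 0 := by
    intro h0
    apply hθ
    rw [aux_cos, h0, mul_zero, mul_zero]
  rw [Complex.tan, div_eq_div_iff hcos hθ]
  rw [Complex.sin, Complex.cos, e1]
  linear_combination (Complex.I * Complex.exp (θ * Complex.I)) * e2

/-- For even positive `n` and complex `x` with `cos(x + kπ/n) ≠ 0` for all `0 ≤ k ≤ n-1`,
`∑_{k=0}^{n-1} tan(x + kπ/n) = n · tan(nx + π/2)`. -/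
theorem sum_tan_eq_of_even (n : ℕ) (hn : 0 < n) (hev : Even n) (x : ℂ)
    (h : ∀ k ∈ Finset.range n, Complex.cos (x + (k : ℂ) * (Real.pi : ℂ) / (n : ℂ)) ≠ 0) :
    ∑ k ∈ Finset.range n, Complex.tan (x + (k : ℂ) * (Real.pi : ℂ) / (n : ℂ)) =
      (n : ℂ) * Complex.tan ((n : ℂ) * x + (Real.pi : ℂ) / 2) := by
  have hNZ : NeZero n := ⟨hn.ne'⟩
  have hn0 : (n : ℂ) ≠ 0 := Nat.cast_ne_zero.mpr hn.ne'
  set ζ : ℂ := Complex.exp (2 * (Real.pi : ℂ) * Complex.I / n) with hζdef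
  have hζ : IsPrimitiveRoot ζ n := Complex.isPrimitiveRoot_exp n hn.ne'
  set w : ℂ := Complex.exp (2 * x * Complex.I) with hwdef
  have hw : w ≠ 0 := Complex.exp_ne_zero _
  have hexp : ∀ k : ℕ,
      Complex.exp (2 * (x + (k : ℂ) * (Real.pi : ℂ) / n) * Complex.I) = w * ζ ^ k := by
    intro k
    rw [hwdef, hζdef, ← Complex.exp_nat_mul, ← Complex.exp_add]
    congr 1
    field_simp
  have hne0 : ∀ k ∈ Finset.range n, w * ζ ^ k + 1 ≠ 0 := by
    intro k hk h0
    apply h k hk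
    have hc := aux_cos (x + (k : ℂ) * (Real.pi : ℂ) / n)
    rw [hexp k, h0] at hc
    have h2 := (mul_eq_zero.mp hc.symm).resolve_left (Complex.exp_ne_zero _)
    exact (mul_eq_zero.mp h2).resolve_left two_ne_zero
  have hper : ∀ k : ℕ, ζ ^ k = ζ ^ (k % n) := by
    intro k
    conv_lhs => rw [← Nat.div_add_mod k n]
    rw [pow_add, pow_mul, hζ.pow_eq_one, one_pow, one_mul]
  have hne0' : ∀ k : ℕ, w * ζ ^ k + 1 ≠ 0 := by
    intro k
    rw [hper k]
    exact hne0 _ (Finset.mem_range.mpr (Nat.mod_lt _ hn))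
  have hwn : w ^ n ≠ 1 := by
    intro hc
    have hxi : (-w⁻¹) ^ n = 1 := by
      rw [hev.neg_pow, inv_pow, hc, inv_one]
    obtain ⟨k, hk, hzk⟩ := hζ.eq_pow_of_pow_eq_one hxi
    apply hne0 k (Finset.mem_range.mpr hk)
    rw [hzk]
    field_simp
    norm_num
  have hsum := aux_sum_frac hn hev hζ hw hwn hne0'
  have hL : ∀ k ∈ Finset.range n, Complex.tan (x + (k : ℂ) * (Real.pi : ℂ) / n)
      = -Complex.I * ((w * ζ ^ k - 1) / (w * ζ ^ k + 1)) := by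
    intro k hk
    rw [aux_tan _ (by rw [hexp k]; exact hne0 k hk), hexp k, mul_div_assoc]
  have hR : Complex.exp (2 * ((n : ℂ) * x + (Real.pi : ℂ) / 2) * Complex.I)
      = -(w ^ n) := by
    rw [show 2 * ((n : ℂ) * x + (Real.pi : ℂ) / 2) * Complex.I
        = (n : ℂ) * (2 * x * Complex.I) + (Real.pi : ℂ) * Complex.I by ring,
      Complex.exp_add, Complex.exp_nat_mul, Complex.exp_pi_mul_I, mul_neg_one, hwdef]
  have hRne : Complex.exp (2 * ((n : ℂ) * x + (Real.pi : ℂ) / 2) * Complex.I) + 1 ≠ 0 := by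
    rw [hR]
    intro hc
    exact hwn (by linear_combination -hc)
  rw [Finset.sum_congr rfl hL, ← Finset.mul_sum, hsum, aux_tan _ hRne, hR]
  have hwn1 : w ^ n - 1 ≠ 0 := sub_ne_zero.mpr hwn
  have hwn2 : -(w ^ n) + 1 ≠ 0 := by
    intro hc
    exact hwn (by linear_combination -hc)
  field_simp
  ring
end

section
/- Let n be an odd positive integer and let x be a complex number such that cos(x + kπ/n) ≠ 0 for every integer k with 0 ≤ k ≤ n−1. Then ∑_{k=0}^{n-1} tan(x + kπ/n) = n · tan(nx). -/
open Complex in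
lemma cos_exp_form (z : ℂ) : Complex.cos z = Complex.exp (-(z*I)) * (Complex.exp (2*I*z) + 1) / 2 := by
  have h : Complex.exp (-(z*I)) * Complex.exp (2*I*z) = Complex.exp (z*I) := by
    rw [← Complex.exp_add]; ring_nf
  rw [Complex.cos, mul_add, mul_one, h]
  ring

open Complex in
lemma tan_exp_form (z : ℂ) (hz : Complex.cos z ≠ 0) :
    Complex.tan z = -I * (Complex.exp (2*I*z) - 1) / (Complex.exp (2*I*z) + 1) := by
  have h1 : Complex.exp (2*I*z) + 1 ≠ 0 := by
    intro hh; apply hz; rw [cos_exp_form, hh]; ring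
  have h : Complex.exp (-(z*I)) * Complex.exp (2*I*z) = Complex.exp (z*I) := by
    rw [← Complex.exp_add]; ring_nf
  have hz' : Complex.exp (-(z*I)) * (Complex.exp (2*I*z) + 1) / 2 ≠ 0 := by
    rw [← cos_exp_form]; exact hz
  rw [Complex.tan_eq_sin_div_cos, Complex.sin, cos_exp_form, div_eq_div_iff hz' h1,
    neg_mul, ← h]
  ring

/-- For odd positive `n` and complex `x` with `cos(x + kπ/n) ≠ 0` for all `0 ≤ k ≤ n-1`,
`∑_{k=0}^{n-1} tan(x + kπ/n) = n · tan(nx)`. -/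
theorem sum_tan_eq_of_odd (n : ℕ) (hn : 0 < n) (hodd : Odd n) (x : ℂ)
    (h : ∀ k ∈ Finset.range n, Complex.cos (x + (k : ℂ) * (Real.pi : ℂ) / (n : ℂ)) ≠ 0) :
    ∑ k ∈ Finset.range n, Complex.tan (x + (k : ℂ) * (Real.pi : ℂ) / (n : ℂ)) =
      (n : ℂ) * Complex.tan ((n : ℂ) * x) := by
  have hn0 : (n:ℂ) ≠ 0 := Nat.cast_ne_zero.mpr hn.ne'
  set I := Complex.I
  set ζ : ℂ := Complex.exp (2 * (Real.pi:ℂ) * I / n) with hζdef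
  set w : ℂ := Complex.exp (2 * I * x) with hwdef
  have hprim : IsPrimitiveRoot ζ n := Complex.isPrimitiveRoot_exp n hn.ne'
  have hζn : ζ ^ n = 1 := hprim.pow_eq_one
  -- exponential of shifted points
  have hu : ∀ k : ℕ, Complex.exp (2*I*(x + (k:ℂ) * (Real.pi:ℂ) / n)) = w * ζ ^ k := by
    intro k
    rw [hζdef, hwdef, ← Complex.exp_nat_mul, ← Complex.exp_add]
    congr 1
    field_simp
  -- each denominator nonzero
  have hune : ∀ k ∈ Finset.range n, w * ζ ^ k + 1 ≠ 0 := by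
    intro k hk h0
    apply h k hk
    rw [cos_exp_form, hu k, h0]
    ring
  -- key sum identity
  have hS : ∑ k ∈ Finset.range n, (∑ i ∈ Finset.range n, (-(w * ζ ^ k)) ^ i) = n := by
    have hterm : ∀ k i : ℕ, (-(w * ζ ^ k)) ^ i = (-w) ^ i * (ζ ^ i) ^ k := by
      intro k i
      rw [show -(w * ζ ^ k) = (-w) * ζ ^ k by ring, mul_pow, ← pow_mul, Nat.mul_comm, pow_mul]
    simp_rw [hterm]
    rw [Finset.sum_comm]
    rw [Finset.sum_eq_single 0]
    · simp
    · intro i hi hi0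
      have hζi : ζ ^ i ≠ 1 :=
        hprim.pow_ne_one_of_pos_of_lt hi0 (Finset.mem_range.mp hi)
      rw [← Finset.mul_sum, geom_sum_eq hζi]
      rw [← pow_mul, Nat.mul_comm, pow_mul, hζn, one_pow]
      simp
    · intro h0
      simp at h0
      omega
  -- geometric sum times (1+u) = 1 + w^n
  have hgeom : ∀ k : ℕ, (∑ i ∈ Finset.range n, (-(w * ζ ^ k)) ^ i) * (w * ζ ^ k + 1)
      = w ^ n + 1 := by
    intro k
    have hgm := geom_sum_mul (-(w * ζ ^ k)) n
    have hx : (-(w * ζ ^ k)) ^ n = -(w ^ n) := by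
      rw [hodd.neg_pow, mul_pow, ← pow_mul, Nat.mul_comm, pow_mul, hζn, one_pow, mul_one]
    rw [hx] at hgm
    linear_combination (-1 : ℂ) * hgm
  -- 1 + w^n ≠ 0
  have hw1 : w ^ n + 1 ≠ 0 := by
    intro h0
    have hz : ∀ k ∈ Finset.range n, (∑ i ∈ Finset.range n, (-(w * ζ ^ k)) ^ i) = 0 := by
      intro k hk
      have := hgeom k
      rw [show w ^ n + 1 = 0 from h0] at this
      exact (mul_eq_zero.mp this).resolve_right (hune k hk)
    rw [Finset.sum_congr rfl hz, Finset.sum_const, smul_zero] at hS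
    exact hn0 hS.symm
  -- sum of reciprocals
  have hinv : ∀ k ∈ Finset.range n, (w ^ n + 1) * (1 / (w * ζ ^ k + 1))
      = ∑ i ∈ Finset.range n, (-(w * ζ ^ k)) ^ i := by
    intro k hk
    rw [← hgeom k]
    field_simp [hune k hk]
  have hsum_inv : ∑ k ∈ Finset.range n, 1 / (w * ζ ^ k + 1) = n / (w ^ n + 1) := by
    have hmul : (w ^ n + 1) * ∑ k ∈ Finset.range n, 1 / (w * ζ ^ k + 1) = n := by
      rw [Finset.mul_sum, Finset.sum_congr rfl hinv, hS]
    rw [eq_div_iff hw1, mul_comm]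
    exact hmul
  -- finish
  have hwn : Complex.exp (2*I*((n:ℂ)*x)) = w ^ n := by
    rw [hwdef, ← Complex.exp_nat_mul]; congr 1; ring
  have hcos : Complex.cos ((n:ℂ)*x) ≠ 0 := by
    rw [cos_exp_form, hwn]
    exact div_ne_zero (mul_ne_zero (Complex.exp_ne_zero _) hw1) two_ne_zero
  have hterm : ∀ k ∈ Finset.range n, Complex.tan (x + (k:ℂ)*(Real.pi:ℂ)/n)
      = -I + 2*I*(1/(w*ζ^k+1)) := by
    intro k hk
    rw [tan_exp_form _ (h k hk), hu k]
    have h2 := hune k hk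
    field_simp
    ring
  rw [Finset.sum_congr rfl hterm, Finset.sum_add_distrib, Finset.sum_const, ← Finset.mul_sum,
    hsum_inv, tan_exp_form _ hcos, hwn, Finset.card_range, nsmul_eq_mul]
  field_simp
  ring
end

section
/- Let n be a positive integer, let c be an integer with 1 ≤ c ≤ n, and let t be a complex number with (1+t)^n ≠ 1. Then ∑_{b=0}^{n-1} ζ_n^{bc}/(ζ_n^b − 1 − t) = n(1+t)^{c-1} / (1 − (1+t)^n). -/
/-- `ζ_n = exp(2πi/n)`, the standard primitive `n`-th root of unity. -/
noncomputable def zeta (n : ℕ) : ℂ := Complex.exp (2 * (Real.pi : ℂ) * Complex.I / (n : ℂ))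

lemma key_partial_frac (n : ℕ) (z w : ℂ) (hz : z ^ n = 1) (hz0 : z ≠ 0)
    (hzw : z - w ≠ 0) (hwn : 1 - w ^ n ≠ 0) :
    (1 : ℂ) / (z - w) = (∑ k ∈ Finset.range n, w ^ k * (z⁻¹) ^ (k + 1)) / (1 - w ^ n) := by
  have hzn : (z⁻¹) ^ n = 1 := by rw [inv_pow, hz, inv_one]
  rw [div_eq_div_iff hzw hwn, one_mul]
  have h1 : ∑ k ∈ Finset.range n, w ^ k * (z⁻¹) ^ (k + 1)
      = z⁻¹ * ∑ k ∈ Finset.range n, (w * z⁻¹) ^ k := by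
    rw [Finset.mul_sum]
    refine Finset.sum_congr rfl fun k _ => ?_
    rw [mul_pow, pow_succ]; ring
  have hgeom : (∑ k ∈ Finset.range n, (w * z⁻¹) ^ k) * (w * z⁻¹ - 1)
      = (w * z⁻¹) ^ n - 1 := geom_sum_mul _ _
  have hun : (w * z⁻¹) ^ n = w ^ n := by rw [mul_pow, hzn, mul_one]
  have hz' : z⁻¹ * z = 1 := inv_mul_cancel₀ hz0
  calc (1 : ℂ) - w ^ n = -((w * z⁻¹) ^ n - 1) := by rw [hun]; ring
    _ = -((∑ k ∈ Finset.range n, (w * z⁻¹) ^ k) * (w * z⁻¹ - 1)) := by rw [hgeom]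
    _ = (∑ k ∈ Finset.range n, (w * z⁻¹) ^ k) * (z⁻¹ * z - w * z⁻¹) := by
        rw [hz']; ring
    _ = (z⁻¹ * ∑ k ∈ Finset.range n, (w * z⁻¹) ^ k) * (z - w) := by ring
    _ = (∑ k ∈ Finset.range n, w ^ k * (z⁻¹) ^ (k + 1)) * (z - w) := by rw [h1]

lemma sum_pow_root (n : ℕ) (hn : 0 < n) (x : ℂ) (hx : x ^ n = 1) :
    ∑ b ∈ Finset.range n, x ^ b = if x = 1 then (n : ℂ) else 0 := by
  by_cases h1 : x = 1
  · simp [h1]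
  · rw [if_neg h1, geom_sum_eq h1, hx, sub_self, zero_div]

/-- For positive `n`, an integer `1 ≤ c ≤ n`, and `t : ℂ` with `(1+t)^n ≠ 1`,
`∑_{b=0}^{n-1} ζ_n^{bc}/(ζ_n^b − 1 − t) = n(1+t)^{c-1}/(1 − (1+t)^n)`. -/
theorem sum_zeta_pow_div_zeta_pow_sub_one_sub (n : ℕ) (hn : 0 < n) (c : ℕ)
    (hc1 : 1 ≤ c) (hcn : c ≤ n) (t : ℂ) (h : (1 + t) ^ n ≠ 1) :
    ∑ b ∈ Finset.range n, zeta n ^ (b * c) / (zeta n ^ b - 1 - t) =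
      (n : ℂ) * (1 + t) ^ (c - 1) / (1 - (1 + t) ^ n) := by
  have hprim : IsPrimitiveRoot (zeta n) n := Complex.isPrimitiveRoot_exp n hn.ne'
  set ζ := zeta n with hζdef
  set w := 1 + t with hw
  have hζn : ζ ^ n = 1 := hprim.pow_eq_one
  have hζ0 : ζ ≠ 0 := by
    intro h0
    rw [h0, zero_pow hn.ne'] at hζn
    exact zero_ne_one hζn
  have hwn : 1 - w ^ n ≠ 0 := sub_ne_zero.2 fun hh => h hh.symm
  have hden : ∀ b : ℕ, ζ ^ b - w ≠ 0 := by
    intro b hb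
    apply h
    have hwe : w = ζ ^ b := (sub_eq_zero.mp hb).symm
    rw [hwe, ← pow_mul, mul_comm, pow_mul, hζn, one_pow]
  have step1 : ∀ b ∈ Finset.range n, ζ ^ (b * c) / (ζ ^ b - 1 - t)
      = (∑ k ∈ Finset.range n, w ^ k * ((ζ ^ c * (ζ ^ (k + 1))⁻¹) ^ b)) / (1 - w ^ n) := by
    intro b _
    have hzb : (ζ ^ b) ^ n = 1 := by rw [← pow_mul, mul_comm, pow_mul, hζn, one_pow]
    have hk := key_partial_frac n (ζ ^ b) w hzb (pow_ne_zero _ hζ0) (hden b) hwn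
    rw [sub_sub, ← hw, div_eq_mul_one_div, hk, mul_div_assoc', Finset.mul_sum]
    congr 1
    refine Finset.sum_congr rfl fun k _ => ?_
    have e1 : ((ζ ^ b)⁻¹) ^ (k + 1) = ((ζ ^ (k + 1))⁻¹) ^ b := by
      rw [← inv_pow, ← inv_pow, ← pow_mul, ← pow_mul, Nat.mul_comm]
    have e2 : ζ ^ (b * c) = (ζ ^ c) ^ b := by rw [← pow_mul, Nat.mul_comm]
    rw [mul_pow, e1, e2]; ring
  rw [Finset.sum_congr rfl step1, ← Finset.sum_div]
  congr 1
  rw [Finset.sum_comm]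
  have hx : ∀ k : ℕ, (ζ ^ c * (ζ ^ (k + 1))⁻¹) ^ n = 1 := by
    intro k
    rw [mul_pow, ← pow_mul, mul_comm c n, pow_mul, hζn, one_pow, inv_pow,
      ← pow_mul, mul_comm (k + 1) n, pow_mul, hζn, one_pow, inv_one, one_mul]
  have hxone : ∀ k ∈ Finset.range n, (ζ ^ c * (ζ ^ (k + 1))⁻¹ = 1 ↔ k = c - 1) := by
    intro k hk
    have hkn := Finset.mem_range.mp hk
    constructor
    · intro h1
      have heq : ζ ^ c = ζ ^ (k + 1) := by
        field_simp at h1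
        exact h1
      have hone : ζ ^ (c + (n - (k + 1))) = 1 := by
        rw [pow_add, heq, ← pow_add]
        have : k + 1 + (n - (k + 1)) = n := by omega
        rw [this, hζn]
      obtain ⟨m, hm⟩ := (hprim.pow_eq_one_iff_dvd _).mp hone
      have hub : c + (n - (k + 1)) < 2 * n := by omega
      have hlb : 0 < c + (n - (k + 1)) := by omega
      rw [hm] at hub hlb
      have hm1 : m = 1 := by
        rcases Nat.lt_or_ge m 2 with h2 | h2
        · interval_cases m
          · omega
          · rfl
        · exfalso
          have : 2 * n ≤ n * m := by
            calc 2 * n = n * 2 := by ring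
            _ ≤ n * m := Nat.mul_le_mul_left n h2
          omega
      rw [hm1, mul_one] at hm
      omega
    · intro hkc
      have : k + 1 = c := by omega
      rw [this, mul_inv_cancel₀ (pow_ne_zero _ hζ0)]
  calc ∑ k ∈ Finset.range n, ∑ b ∈ Finset.range n, w ^ k * (ζ ^ c * (ζ ^ (k + 1))⁻¹) ^ b
      = ∑ k ∈ Finset.range n, w ^ k * (if ζ ^ c * (ζ ^ (k + 1))⁻¹ = 1 then (n : ℂ) else 0) := by
        refine Finset.sum_congr rfl fun k _ => ?_
        rw [← Finset.mul_sum, sum_pow_root n hn _ (hx k)]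
    _ = ∑ k ∈ Finset.range n, (if k = c - 1 then w ^ k * (n : ℂ) else 0) := by
        refine Finset.sum_congr rfl fun k hk => ?_
        by_cases hcnd : ζ ^ c * (ζ ^ (k + 1))⁻¹ = 1
        · rw [if_pos hcnd, if_pos ((hxone k hk).mp hcnd)]
        · rw [if_neg hcnd, if_neg (fun hh => hcnd ((hxone k hk).mpr hh)), mul_zero]
    _ = w ^ (c - 1) * (n : ℂ) := by
        rw [Finset.sum_ite_eq' ]
        rw [if_pos (Finset.mem_range.mpr (by omega))]
    _ = (n : ℂ) * w ^ (c - 1) := by ring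
end

section
/- For every fixed natural number m there exists a polynomial P with rational coefficients such that for every integer n ≥ 2 one has ∑_{b=1}^{n-1} (1/(ζ_n^b − 1))^m = P(n) (equality of complex numbers). -/
open Polynomial Finset

/-- `α n b = 1/(ζ_n^b - 1)`. -/
noncomputable def alphaC (n b : ℕ) : ℂ := 1 / (zeta n ^ b - 1)

lemma zeta_primitive {n : ℕ} (hn : 2 ≤ n) : IsPrimitiveRoot (zeta n) n :=
  Complex.isPrimitiveRoot_exp n (by omega)

lemma zeta_pow_ne_one {n b : ℕ} (hn : 2 ≤ n) (hb : b ∈ Finset.Ico 1 n) :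
    zeta n ^ b ≠ 1 := by
  rw [Finset.mem_Ico] at hb
  exact (zeta_primitive hn).pow_ne_one_of_pos_of_lt (by omega) hb.2

/-- `X^n - 1 = ∏_{b<n} (X - ζ^b)` in `ℂ[X]`. -/
lemma X_pow_sub_one_eq (n : ℕ) (hn : 2 ≤ n) :
    (X : ℂ[X]) ^ n - 1 = ∏ b ∈ Finset.range n, (X - C (zeta n ^ b)) := by
  have hζ := zeta_primitive hn
  have hmonic : ((X : ℂ[X]) ^ n - 1).Monic := by
    simpa using monic_X_pow_sub_C (1 : ℂ) (by omega : n ≠ 0)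
  have hroots : ((X : ℂ[X]) ^ n - 1).roots = (Multiset.range n).map (fun i => zeta n ^ i) := by
    have := hζ.nthRoots_eq (one_pow n)
    simp only [mul_one] at this
    rw [← this, nthRoots]
    norm_num
  have hsplit : ((X : ℂ[X]) ^ n - 1).Splits := IsAlgClosed.splits _
  have := hsplit.eq_prod_roots_of_monic hmonic
  rw [hroots] at this
  rw [this, Finset.prod_eq_multiset_prod, Multiset.map_map]
  rfl

/-- `∏_{b=1}^{n-1} (1 - ζ^b) = n`. -/
lemma prod_one_sub_zeta (n : ℕ) (hn : 2 ≤ n) :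
    ∏ b ∈ Finset.Ico 1 n, (1 - zeta n ^ b) = (n : ℂ) := by
  have h1 : (X : ℂ[X]) ^ n - 1 =
      (X - C 1) * ∏ b ∈ Finset.Ico 1 n, (X - C (zeta n ^ b)) := by
    rw [X_pow_sub_one_eq n hn, Finset.range_eq_Ico,
      Finset.prod_eq_prod_Ico_succ_bot (by omega : 0 < n)]
    simp
  have h2 : (X : ℂ[X]) ^ n - 1 = (X - C 1) * ∑ i ∈ Finset.range n, X ^ i := by
    have := geom_sum_mul (X : ℂ[X]) n
    rw [← this, Polynomial.C_1, mul_comm]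
  have hXC : (X - C 1 : ℂ[X]) ≠ 0 := X_sub_C_ne_zero 1
  have h3 : (∏ b ∈ Finset.Ico 1 n, (X - C (zeta n ^ b)) : ℂ[X]) =
      ∑ i ∈ Finset.range n, X ^ i := mul_left_cancel₀ hXC (h1.symm.trans h2)
  have := congrArg (Polynomial.eval 1) h3
  simp only [eval_prod, eval_sub, eval_X, eval_C, eval_finset_sum, eval_pow, one_pow,
    Finset.sum_const, Finset.card_range, nsmul_eq_mul, mul_one] at this
  exact this

/-- `∏_{b=1}^{n-1} ((1-ζ^b) y + 1) = (y+1)^n - y^n` for `y ≠ 0`. -/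
lemma prod_linear (n : ℕ) (hn : 2 ≤ n) (y : ℂ) (hy : y ≠ 0) :
    ∏ b ∈ Finset.Ico 1 n, ((1 - zeta n ^ b) * y + 1) = (y + 1) ^ n - y ^ n := by
  set x : ℂ := (y + 1) / y with hx
  have hfac : ∀ b ∈ Finset.Ico 1 n, (1 - zeta n ^ b) * y + 1 = y * (x - zeta n ^ b) := by
    intro b _
    linear_combination -(by rw [hx]; field_simp : y * x = y + 1)
  rw [Finset.prod_congr rfl hfac, Finset.prod_mul_distrib, Finset.prod_const, Nat.card_Ico]
  have h1 : x ^ n - 1 = ∏ b ∈ Finset.range n, (x - zeta n ^ b) := by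
    have := congrArg (Polynomial.eval x) (X_pow_sub_one_eq n hn)
    simp only [eval_prod, eval_sub, eval_X, eval_C, eval_pow, eval_one] at this
    exact this
  have h2 : x ^ n - 1 = (x - 1) * ∏ b ∈ Finset.Ico 1 n, (x - zeta n ^ b) := by
    rw [h1, Finset.range_eq_Ico, Finset.prod_eq_prod_Ico_succ_bot (by omega : 0 < n)]
    simp
  have hx1 : x - 1 = 1 / y := by field_simp [hx]; linear_combination (by rw [hx]; field_simp : y * x = y + 1)
  have h3 : ∏ b ∈ Finset.Ico 1 n, (x - zeta n ^ b) = y * (x ^ n - 1) := by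
    rw [h2, hx1]; field_simp
  rw [h3]
  have hxy : y * x = y + 1 := by rw [hx]; field_simp
  have hpow : y ^ (n - 1) * y = y ^ n := by
    rw [← pow_succ]; congr 1; omega
  have key : y ^ (n - 1) * (y * (x ^ n - 1)) = (y + 1) ^ n - y ^ n := by
    rw [show y ^ (n - 1) * (y * (x ^ n - 1))
        = (y ^ (n - 1) * y) * x ^ n - (y ^ (n - 1) * y) by ring, hpow, ← mul_pow, hxy]
  linear_combination key

/-- The key polynomial identity: `n ∏_{b=1}^{n-1} (X - α_b) = (X+1)^n - X^n`. -/
lemma poly_identity (n : ℕ) (hn : 2 ≤ n) :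
    C (n : ℂ) * ∏ b ∈ Finset.Ico 1 n, (X - C (alphaC n b)) = (X + 1) ^ n - X ^ n := by
  apply eq_of_infinite_eval_eq
  apply Set.Infinite.mono (s := {x : ℂ | x ≠ 0})
  · intro y hy
    simp only [Set.mem_setOf_eq] at hy ⊢
    have heval : Polynomial.eval y (C (n : ℂ) * ∏ b ∈ Finset.Ico 1 n, (X - C (alphaC n b)))
        = (n : ℂ) * ∏ b ∈ Finset.Ico 1 n, (y - alphaC n b) := by
      simp [eval_prod]
    rw [heval, ← prod_one_sub_zeta n hn, ← Finset.prod_mul_distrib]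
    have hfac : ∀ b ∈ Finset.Ico 1 n,
        (1 - zeta n ^ b) * (y - alphaC n b) = (1 - zeta n ^ b) * y + 1 := by
      intro b hb
      have hne : (1 : ℂ) - zeta n ^ b ≠ 0 := by
        rw [sub_ne_zero]; exact fun h => zeta_pow_ne_one hn hb h.symm
      have : alphaC n b = -(1 / (1 - zeta n ^ b)) := by
        rw [alphaC, one_div, one_div,
          show zeta n ^ b - 1 = -(1 - zeta n ^ b) by ring, inv_neg]
      rw [this]
      field_simp
      ring
    rw [Finset.prod_congr rfl hfac, prod_linear n hn y hy]
    simp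
  · have : ({x : ℂ | x ≠ 0}) = ({0} : Set ℂ)ᶜ := by ext x; simp
    rw [this]
    exact (Set.finite_singleton 0).infinite_compl

lemma card_alpha (n : ℕ) : Multiset.card ((Finset.Ico 1 n).val.map (alphaC n)) = n - 1 := by
  simp

/-- The elementary symmetric functions of the `α_b`. -/
lemma esymm_alpha (n : ℕ) (hn : 2 ≤ n) (k : ℕ) :
    ((Finset.Ico 1 n).val.map (alphaC n)).esymm k
      = (-1) ^ k * (n.choose (k + 1) : ℂ) / n := by
  set s := (Finset.Ico 1 n).val.map (alphaC n) with hs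
  have hcard : Multiset.card s = n - 1 := card_alpha n
  have hnne : (n : ℂ) ≠ 0 := Nat.cast_ne_zero.mpr (by omega)
  by_cases hk : k ≤ n - 1
  · -- coefficient extraction
    have hppid : (s.map fun t => X - C t).prod = ∏ b ∈ Finset.Ico 1 n, (X - C (alphaC n b)) := by
      rw [hs, Multiset.map_map, Finset.prod_eq_multiset_prod]; rfl
    have hco := congrArg (fun p => Polynomial.coeff p (n - 1 - k)) (poly_identity n hn)
    simp only [← hppid] at hco
    rw [coeff_C_mul, Multiset.prod_X_sub_C_coeff s (by omega : n - 1 - k ≤ Multiset.card s)]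
      at hco
    rw [hcard] at hco
    have hk' : n - 1 - (n - 1 - k) = k := by omega
    rw [hk'] at hco
    have hrhs : ((X + 1 : ℂ[X]) ^ n - X ^ n).coeff (n - 1 - k) = (n.choose (n - 1 - k) : ℂ) := by
      rw [coeff_sub, coeff_X_add_one_pow, coeff_X_pow, if_neg (by omega)]
      simp
    rw [hrhs] at hco
    have hch : n.choose (n - 1 - k) = n.choose (k + 1) := by
      have : n - 1 - k = n - (k + 1) := by omega
      rw [this, Nat.choose_symm (by omega)]
    rw [hch] at hco
    rw [eq_div_iff hnne]
    have hsq : ((-1 : ℂ)) ^ k * (-1) ^ k = 1 := by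
      rw [← pow_add]; exact Even.neg_one_pow ⟨k, rfl⟩
    linear_combination ((-1 : ℂ) ^ k) * hco - ((n : ℂ) * s.esymm k) * hsq
  · -- k ≥ n : both sides vanish
    have h1 : s.esymm k = 0 := by
      rw [Multiset.esymm, Multiset.powersetCard_eq_empty k (by omega)]
      simp
    have h2 : n.choose (k + 1) = 0 := Nat.choose_eq_zero_of_lt (by omega)
    rw [h1, h2]
    simp

/-- The rational polynomial giving `e_k` as a function of `n`. -/
noncomputable def Epoly (k : ℕ) : Polynomial ℚ :=
  Polynomial.C ((-1 : ℚ) ^ k / ((k + 1).factorial : ℚ)) * ∏ j ∈ Finset.Icc 1 k, (X - C (j : ℚ))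

lemma nat_identity (n k : ℕ) (hk : k + 1 ≤ n) :
    (k + 1).factorial * n.choose (k + 1) = n * ∏ j ∈ Finset.Icc 1 k, (n - j) := by
  rw [← Nat.descFactorial_eq_factorial_mul_choose, Nat.descFactorial_eq_prod_range]
  rw [Finset.prod_range_succ', Nat.sub_zero, mul_comm]
  congr 1
  rw [show Finset.Icc 1 k = Finset.Ico 1 (k+1) by rfl, Finset.prod_Ico_eq_prod_range]
  simp [add_comm]

lemma esymm_poly_val (n : ℕ) (hn : 2 ≤ n) (k : ℕ) :
    ((Finset.Ico 1 n).val.map (alphaC n)).esymm k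
      = Polynomial.aeval (n : ℂ) (Epoly k) := by
  rw [esymm_alpha n hn k, Epoly]
  have hnne : (n : ℂ) ≠ 0 := Nat.cast_ne_zero.mpr (by omega)
  have hfacne : ((k + 1).factorial : ℂ) ≠ 0 := Nat.cast_ne_zero.mpr (Nat.factorial_ne_zero _)
  rw [map_mul, aeval_C, map_prod]
  simp only [map_sub, aeval_X, aeval_C]
  have hc : (algebraMap ℚ ℂ) ((-1) ^ k / ((k + 1).factorial : ℚ))
      = (-1) ^ k / ((k + 1).factorial : ℂ) := by
    push_cast
    simp
  have hj : ∀ j ∈ Finset.Icc 1 k, (algebraMap ℚ ℂ) ((j : ℚ)) = (j : ℂ) := by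
    intro j _; push_cast; ring
  rw [hc, Finset.prod_congr rfl (fun j hj' => by rw [hj j hj'])]
  -- goal : (-1)^k * choose / n = (-1)^k / (k+1)! * ∏ (n - j)
  by_cases hk : k + 1 ≤ n
  · have := nat_identity n k hk
    have hcast : ((k + 1).factorial : ℂ) * (n.choose (k + 1) : ℂ)
        = (n : ℂ) * ∏ j ∈ Finset.Icc 1 k, ((n : ℂ) - j) := by
      have hprod : (((∏ j ∈ Finset.Icc 1 k, (n - j) : ℕ)) : ℂ)
          = ∏ j ∈ Finset.Icc 1 k, ((n : ℂ) - j) := by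
        push_cast
        apply Finset.prod_congr rfl
        intro j hj'
        rw [Finset.mem_Icc] at hj'
        have : j ≤ n := by omega
        push_cast [this]
        ring
      calc ((k + 1).factorial : ℂ) * (n.choose (k + 1) : ℂ)
          = (((k + 1).factorial * n.choose (k + 1) : ℕ) : ℂ) := by push_cast; ring
        _ = ((n * ∏ j ∈ Finset.Icc 1 k, (n - j) : ℕ) : ℂ) := by rw [this]
        _ = (n : ℂ) * ∏ j ∈ Finset.Icc 1 k, ((n : ℂ) - j) := by rw [Nat.cast_mul, hprod]
    field_simp
    linear_combination hcast
  · have h2 : n.choose (k + 1) = 0 := Nat.choose_eq_zero_of_lt (by omega)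
    have h3 : ∏ j ∈ Finset.Icc 1 k, ((n : ℂ) - j) = 0 := by
      apply Finset.prod_eq_zero (i := n)
      · rw [Finset.mem_Icc]; omega
      · ring
    rw [h2, h3]
    simp

open MvPolynomial in
/-- Newton's identity at value level. -/
lemma newton_value (n : ℕ) (hn : 2 ≤ n) (k : ℕ) (hk : 0 < k) :
    ∑ b ∈ Finset.Ico 1 n, (alphaC n b) ^ k
      = (-1) ^ (k + 1) * k * ((Finset.Ico 1 n).val.map (alphaC n)).esymm k
        - ∑ a ∈ Finset.HasAntidiagonal.antidiagonal k with a.1 ∈ Set.Ioo 0 k,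
            (-1) ^ a.1 * ((Finset.Ico 1 n).val.map (alphaC n)).esymm a.1
              * ∑ b ∈ Finset.Ico 1 n, (alphaC n b) ^ a.2 := by
  classical
  set σ := {b // b ∈ Finset.Ico 1 n}
  set x : σ → ℂ := fun i => alphaC n i.val with hxdef
  have hesymm : ∀ j : ℕ, MvPolynomial.aeval x (esymm σ ℂ j)
      = ((Finset.Ico 1 n).val.map (alphaC n)).esymm j := by
    intro j
    rw [MvPolynomial.aeval_esymm_eq_multiset_esymm]
    congr 1
    rw [Finset.univ_eq_attach, Finset.attach_val]
    conv_rhs => rw [← Multiset.attach_map_val (Finset.Ico 1 n).val]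
    rw [Multiset.map_map]
    rfl
  have hpsum : ∀ j : ℕ, MvPolynomial.aeval x (psum σ ℂ j)
      = ∑ b ∈ Finset.Ico 1 n, (alphaC n b) ^ j := by
    intro j
    rw [psum, map_sum]
    simp only [map_pow, MvPolynomial.aeval_X]
    rw [Finset.univ_eq_attach]
    exact Finset.sum_attach (Finset.Ico 1 n) (fun b => alphaC n b ^ j)
  have := congrArg (MvPolynomial.aeval x) (psum_eq_mul_esymm_sub_sum σ ℂ k hk)
  rw [hpsum, map_sub, map_mul, map_mul, map_pow, map_neg, map_one, hesymm,
    map_natCast, map_sum] at this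
  rw [this]
  congr 1
  apply Finset.sum_congr rfl
  intro a _
  rw [map_mul, map_mul, map_pow, map_neg, map_one, hesymm, hpsum]

lemma alpha_eq (n b : ℕ) : (1 : ℂ) / (zeta n ^ b - 1) = alphaC n b := rfl

/-- For every fixed `m`, there is a polynomial `P` with rational coefficients such that
for every `n ≥ 2`, `∑_{b=1}^{n-1} (1/(ζ_n^b − 1))^m = P(n)`. -/
theorem powerSum_alpha_polynomial (m : ℕ) :
    ∃ P : Polynomial ℚ, ∀ n : ℕ, 2 ≤ n →
      ∑ b ∈ Finset.Ico 1 n, (1 / (zeta n ^ b - 1)) ^ m =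
        Polynomial.aeval (n : ℂ) P := by
  classical
  induction m using Nat.strong_induction_on with
  | _ m ih =>
    rcases Nat.eq_zero_or_pos m with rfl | hm
    · refine ⟨Polynomial.X - 1, fun n hn => ?_⟩
      simp only [pow_zero, Finset.sum_const, Nat.card_Ico, nsmul_eq_mul, mul_one]
      rw [map_sub, aeval_X, map_one]
      push_cast [Nat.cast_sub (by omega : 1 ≤ n)]
      ring
    · choose Q hQ using fun k (h : k < m) => ih k h
      set Q' : ℕ → Polynomial ℚ := fun k => if h : k < m then Q k h else 0 with hQ'
      refine ⟨(-1 : Polynomial ℚ) ^ (m + 1) * (m : Polynomial ℚ) * Epoly m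
        - ∑ a ∈ Finset.HasAntidiagonal.antidiagonal m with a.1 ∈ Set.Ioo 0 m,
            (-1 : Polynomial ℚ) ^ a.1 * Epoly a.1 * Q' a.2, fun n hn => ?_⟩
      simp only [alpha_eq]
      rw [newton_value n hn m hm, map_sub, map_mul, map_mul, map_pow, map_neg, map_one,
        map_natCast, map_sum]
      congr 1
      · rw [esymm_poly_val n hn m]
      · apply Finset.sum_congr rfl
        intro a ha
        simp only [Finset.mem_filter, Finset.HasAntidiagonal.mem_antidiagonal, Set.mem_Ioo] at ha
        have ha2 : a.2 < m := by omega
        rw [map_mul, map_mul, map_pow, map_neg, map_one, esymm_poly_val n hn a.1]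
        have hQ'' : Q' a.2 = Q a.2 ha2 := dif_pos ha2
        rw [hQ'', ← hQ a.2 ha2 n hn]
        simp only [alpha_eq]
end

section
/- Let n be a positive integer, let M = (m_1,…,m_k) be a finite list of natural numbers, and let b be an integer. Then β_M(2n, b) + β_M(2n, n+b) = 2 · β_M(n, b). -/
/-- `β_{m_1,…,m_k}(n,b) = ∑_{a=0}^{n-1} ζ_n^{ab} ∏_j B_{m_j}(a/n)`, where
`B_m` is the `m`-th Bernoulli polynomial. -/
noncomputable def betaB (M : List ℕ) (n : ℕ) (b : ℤ) : ℂ :=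
  ∑ a ∈ Finset.range n, zeta n ^ ((a : ℤ) * b) *
    (M.map fun m => (((Polynomial.bernoulli m).eval ((a : ℚ) / (n : ℚ)) : ℚ) : ℂ)).prod

lemma zeta_ne_zero (n : ℕ) : zeta n ≠ 0 := Complex.exp_ne_zero _

lemma my_sum_range_two_mul {β : Type*} [AddCommMonoid β] (n : ℕ) (f : ℕ → β) :
    ∑ a ∈ Finset.range (2 * n), f a
      = ∑ c ∈ Finset.range n, (f (2 * c) + f (2 * c + 1)) := by
  induction n with
  | zero => simp
  | succ n ih =>
    rw [Nat.mul_succ, Finset.sum_range_succ, Finset.sum_range_succ, ih,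
      Finset.sum_range_succ, add_assoc]

lemma zeta_sq (n : ℕ) (hn : 0 < n) : zeta (2 * n) ^ (2 : ℤ) = zeta n := by
  rw [zeta, zeta, ← Complex.exp_int_mul]
  congr 1
  have : ((2 * n : ℕ) : ℂ) = 2 * n := by push_cast; ring
  rw [this]
  have hn' : (n : ℂ) ≠ 0 := Nat.cast_ne_zero.mpr hn.ne'
  field_simp
  ring

lemma zeta_pow_n (n : ℕ) (hn : 0 < n) : zeta (2 * n) ^ (n : ℤ) = -1 := by
  rw [zeta, ← Complex.exp_int_mul]
  have hn' : (n : ℂ) ≠ 0 := Nat.cast_ne_zero.mpr hn.ne'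
  have : ((n : ℤ) : ℂ) * (2 * (Real.pi : ℂ) * Complex.I / ((2 * n : ℕ) : ℂ))
      = Real.pi * Complex.I := by
    push_cast
    field_simp
  rw [this, Complex.exp_pi_mul_I]

/-- `β_M(2n, b) + β_M(2n, n+b) = 2 · β_M(n, b)`. -/
theorem betaB_two_mul_add (n : ℕ) (hn : 0 < n) (M : List ℕ) (b : ℤ) :
    betaB M (2 * n) b + betaB M (2 * n) ((n : ℤ) + b) = 2 * betaB M n b := by
  set z := zeta (2 * n) with hzdef
  have hz : z ≠ 0 := zeta_ne_zero _
  have hz2 : z ^ (2 : ℤ) = zeta n := zeta_sq n hn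
  have hzn : z ^ (n : ℤ) = -1 := zeta_pow_n n hn
  set P : ℕ → ℂ := fun a =>
    (M.map fun m => (((Polynomial.bernoulli m).eval ((a : ℚ) / ((2 * n : ℕ) : ℚ)) : ℚ) : ℂ)).prod
    with hP
  rw [betaB, betaB, betaB, ← Finset.sum_add_distrib, Finset.mul_sum,
    my_sum_range_two_mul n]
  apply Finset.sum_congr rfl
  intro c _
  have heval : (((2 * c : ℕ) : ℚ) / ((2 * n : ℕ) : ℚ)) = (c : ℚ) / (n : ℚ) := by
    push_cast
    rw [mul_div_mul_left _ _ (two_ne_zero)]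
  have hzeven : ∀ d : ℤ, z ^ ((2 * c : ℤ) * d) = zeta n ^ ((c : ℤ) * d) := by
    intro d
    rw [show (2 * c : ℤ) * d = 2 * (c * d) by ring, zpow_mul, hz2]
  have hodd : z ^ (((2 * c + 1 : ℕ) : ℤ) * ((n : ℤ) + b))
      = - z ^ (((2 * c + 1 : ℕ) : ℤ) * b) := by
    rw [mul_add, zpow_add₀ hz, mul_comm ((2 * c + 1 : ℕ) : ℤ) (n : ℤ), zpow_mul, hzn]
    push_cast
    rw [show ((2:ℤ) * c + 1) = 2 * c + 1 from rfl]
    rw [zpow_add₀ (by norm_num : (-1 : ℂ) ≠ 0), zpow_mul]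
    norm_num
  have h2c : (((2 * c : ℕ) : ℤ)) = (2 * c : ℤ) := by push_cast; ring
  have hzeven' : z ^ ((2 * (c : ℤ)) * ((n : ℤ) + b)) = zeta n ^ ((c : ℤ) * b) := by
    rw [mul_add, zpow_add₀ hz, show (2 * (c : ℤ)) * (n : ℤ) = (n : ℤ) * (2 * c) by ring,
      zpow_mul, hzn, hzeven b]
    have : ((-1 : ℂ)) ^ (2 * (c : ℤ)) = 1 := by
      rw [zpow_mul]; norm_num
    rw [this, one_mul]
  rw [h2c, hzeven b, hzeven', hodd, heval]
  ring
end

section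
/- Fix natural numbers m_1,…,m_k and set m = m_1 + ⋯ + m_k. Then there exist polynomials f_0, f_1, …, f_{m-1} with rational coefficients, depending only on m_1,…,m_k, such that for every positive integer n and every integer b with 1 ≤ b ≤ n−1, β_{m_1,…,m_k}(n,b) = ∑_{i=0}^{m-1} (1/n)^i · f_i( 1/(ζ_n^b − 1) ) (if m = 0 the right-hand side is the empty sum 0). -/
open Finset Polynomial

lemma binom_sub_one (r : ℕ) (y : ℂ) :
    (y - 1) ^ r = ∑ s ∈ range (r + 1), y ^ s * (-1 : ℂ) ^ (r - s) * (r.choose s) := by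
  rw [sub_eq_add_neg, add_pow]

lemma key_rec (r n : ℕ) (x : ℂ) (hx : x ^ n = 1) :
    (x - 1) * ∑ a ∈ range n, (a : ℂ) ^ r * x ^ a
      = ((n : ℂ) - 1) ^ r - (-1) ^ r
        + ∑ s ∈ range r, (-1 : ℂ) ^ (r - s) * (r.choose s) *
            ∑ a ∈ range n, (a : ℂ) ^ s * x ^ a := by
  set f : ℕ → ℂ := fun a => ((a : ℂ) - 1) ^ r * x ^ a with hf
  have h1 : x * ∑ a ∈ range n, (a : ℂ) ^ r * x ^ a = ∑ a ∈ range n, f (a + 1) := by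
    rw [Finset.mul_sum]
    refine Finset.sum_congr rfl fun a _ => ?_
    simp only [hf]
    push_cast
    ring
  have h2 : ∑ a ∈ range n, f (a + 1) = (∑ a ∈ range n, f a) + f n - f 0 := by
    have e1 := Finset.sum_range_succ' f n
    have e2 := Finset.sum_range_succ f n
    rw [e2] at e1
    linear_combination -e1
  have hfn : f n = ((n : ℂ) - 1) ^ r := by simp [hf, hx]
  have hf0 : f 0 = (-1 : ℂ) ^ r := by simp [hf]
  have h3 : ∀ a : ℕ, f a - (a : ℂ) ^ r * x ^ a
      = (∑ s ∈ range r, (-1 : ℂ) ^ (r - s) * (r.choose s) * (a : ℂ) ^ s) * x ^ a := by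
    intro a
    have hb := binom_sub_one r (a : ℂ)
    rw [Finset.sum_range_succ] at hb
    simp only [Nat.sub_self, pow_zero, Nat.choose_self, Nat.cast_one, mul_one] at hb
    have e3 : ((a : ℂ) - 1) ^ r - (a : ℂ) ^ r
        = ∑ s ∈ range r, (-1 : ℂ) ^ (r - s) * (r.choose s) * (a : ℂ) ^ s := by
      rw [hb, add_sub_cancel_right]
      exact Finset.sum_congr rfl fun s _ => by ring
    rw [hf]; linear_combination x ^ a * e3
  have h4 : ∀ s : ℕ, ∑ a ∈ range n,
        (-1 : ℂ) ^ (r - s) * (r.choose s) * (a : ℂ) ^ s * x ^ a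
      = (-1 : ℂ) ^ (r - s) * (r.choose s) * ∑ a ∈ range n, (a : ℂ) ^ s * x ^ a := by
    intro s
    rw [Finset.mul_sum]
    exact Finset.sum_congr rfl fun a _ => by ring
  calc (x - 1) * ∑ a ∈ range n, (a : ℂ) ^ r * x ^ a
      = x * (∑ a ∈ range n, (a : ℂ) ^ r * x ^ a) - ∑ a ∈ range n, (a : ℂ) ^ r * x ^ a := by ring
    _ = (∑ a ∈ range n, (f a - (a : ℂ) ^ r * x ^ a)) + f n - f 0 := by
        rw [h1, h2, Finset.sum_sub_distrib]; ring
    _ = _ := by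
        rw [hfn, hf0, Finset.sum_congr rfl fun a _ => h3 a]
        simp only [Finset.sum_mul]
        rw [Finset.sum_comm, Finset.sum_congr rfl fun s _ => h4 s]
        ring

lemma pow_cancel {n : ℂ} (hn : n ≠ 0) {i r : ℕ} (h : i ≤ r) :
    (n : ℂ) ^ r * (n⁻¹) ^ i = n ^ (r - i) := by
  rw [inv_pow, pow_sub₀ _ hn h]

lemma claim1 (r : ℕ) (n : ℂ) (hne : n ≠ 0) :
    n ^ r * ∑ i ∈ range r, (n⁻¹) ^ i * ((-1 : ℂ) ^ i * (r.choose (r - i)))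
      = (n - 1) ^ r - (-1) ^ r := by
  rw [Finset.mul_sum]
  calc ∑ i ∈ range r, n ^ r * ((n⁻¹) ^ i * ((-1 : ℂ) ^ i * (r.choose (r - i))))
      = ∑ i ∈ range r, n ^ (r - i) * ((-1 : ℂ) ^ i * (r.choose (r - i))) := by
        refine Finset.sum_congr rfl fun i hi => ?_
        rw [← mul_assoc, pow_cancel hne (Finset.mem_range.1 hi).le]
    _ = ∑ j ∈ range r, n ^ (j + 1) * ((-1 : ℂ) ^ (r - (j + 1)) * (r.choose (j + 1))) := by
        rw [← Finset.sum_range_reflect]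
        refine Finset.sum_congr rfl fun j hj => ?_
        have hj' := Finset.mem_range.1 hj
        have e1 : r - (r - 1 - j) = j + 1 := by omega
        have e2 : r - 1 - j = r - (j + 1) := by omega
        rw [e1, e2]
    _ = (n - 1) ^ r - (-1) ^ r := by
        rw [binom_sub_one r n, Finset.sum_range_succ']
        simp only [pow_zero, Nat.sub_zero, Nat.choose_zero_right, Nat.cast_one, mul_one, one_mul]
        have h5 : ∑ j ∈ range r, n ^ (j + 1) * ((-1 : ℂ) ^ (r - (j + 1)) * (r.choose (j + 1)))
            = ∑ j ∈ range r, n ^ (j + 1) * (-1 : ℂ) ^ (r - (j + 1)) * (r.choose (j + 1)) :=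
          Finset.sum_congr rfl fun j _ => by ring
        rw [h5]; ring

lemma claim2 (r s : ℕ) (hs : s < r) (n : ℂ) (hne : n ≠ 0) (A : ℕ → ℂ) :
    n ^ r * ∑ i ∈ range r, (n⁻¹) ^ i * (if r - s ≤ i then A (i - (r - s)) else 0)
      = n ^ s * ∑ j ∈ range s, (n⁻¹) ^ j * A j := by
  set G : ℕ → ℂ := fun i => (n⁻¹) ^ i * (if r - s ≤ i then A (i - (r - s)) else 0) with hG
  have e := Finset.sum_range_add G (r - s) s
  rw [show r - s + s = r from by omega] at e
  have e0 : ∑ i ∈ range (r - s), G i = 0 := by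
    refine Finset.sum_eq_zero fun i hi => ?_
    have hi' := Finset.mem_range.1 hi
    have hcond : ¬ r - s ≤ i := by omega
    simp only [hG, if_neg hcond, mul_zero]
  have e1 : ∀ j ∈ range s, G (r - s + j) = (n⁻¹) ^ (r - s) * ((n⁻¹) ^ j * A j) := by
    intro j hj
    simp only [hG]
    rw [if_pos (by omega : r - s ≤ r - s + j), show r - s + j - (r - s) = j from by omega,
      pow_add]
    ring
  rw [e, e0, zero_add, Finset.sum_congr rfl e1, ← Finset.mul_sum, ← mul_assoc,
    pow_cancel hne (by omega : r - s ≤ r), show r - (r - s) = s from by omega]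

lemma lemA (r : ℕ) : ∃ h : ℕ → Polynomial ℚ, ∀ (n : ℕ) (x : ℂ), 0 < n → x ^ n = 1 → x ≠ 1 →
    ∑ a ∈ range n, (a : ℂ) ^ r * x ^ a
      = (n : ℂ) ^ r * ∑ i ∈ range r, ((n : ℂ)⁻¹) ^ i * aeval (x - 1)⁻¹ (h i) := by
  induction r using Nat.strong_induction_on with
  | _ r IH =>
  choose g hg using fun s (hs : s < r) => IH s hs
  set g' : ℕ → ℕ → Polynomial ℚ := fun s i => if hs : s < r then g s hs i else 0 with hg'def
  set hfun : ℕ → Polynomial ℚ := fun i =>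
    Polynomial.C ((-1 : ℚ) ^ i * (r.choose (r - i))) * Polynomial.X
      + ∑ s ∈ range r, Polynomial.C ((-1 : ℚ) ^ (r - s) * (r.choose s)) *
          (Polynomial.X * (if r - s ≤ i then g' s (i - (r - s)) else 0)) with hfun_def
  refine ⟨hfun, ?_⟩
  intro n x hn hx hx1
  have hne : (n : ℂ) ≠ 0 := Nat.cast_ne_zero.2 hn.ne'
  have hu : x - 1 ≠ 0 := sub_ne_zero.2 hx1
  set u : ℂ := (x - 1)⁻¹ with hudef
  have haeval : ∀ i, (aeval u (hfun i) : ℂ)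
      = ((-1 : ℂ) ^ i * (r.choose (r - i))) * u
        + ∑ s ∈ range r, ((-1 : ℂ) ^ (r - s) * (r.choose s)) *
            (u * (if r - s ≤ i then (aeval u (g' s (i - (r - s))) : ℂ) else 0)) := by
    intro i
    simp only [hfun_def]
    rw [map_add, map_mul, map_sum]
    simp only [aeval_C, aeval_X, map_mul, apply_ite (aeval u), map_zero]
    push_cast
    ring
  set T : ℕ → ℂ := fun s => ∑ a ∈ range n, (a : ℂ) ^ s * x ^ a with hT
  have hgT : ∀ s (hs : s < r),
      (n : ℂ) ^ s * ∑ j ∈ range s, ((n : ℂ)⁻¹) ^ j * (aeval u (g' s j) : ℂ) = T s := by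
    intro s hs
    have := (hg s hs n x hn hx hx1).symm
    simpa only [hg'def, dif_pos hs] using this
  have main : (n : ℂ) ^ r * ∑ i ∈ range r, ((n : ℂ)⁻¹) ^ i * (aeval u (hfun i) : ℂ)
      = u * (((n : ℂ) - 1) ^ r - (-1) ^ r
          + ∑ s ∈ range r, (-1 : ℂ) ^ (r - s) * (r.choose s) * T s) :=
    calc (n : ℂ) ^ r * ∑ i ∈ range r, ((n : ℂ)⁻¹) ^ i * (aeval u (hfun i) : ℂ)
        = u * ((n : ℂ) ^ r * ∑ i ∈ range r, ((n : ℂ)⁻¹) ^ i *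
              ((-1 : ℂ) ^ i * (r.choose (r - i))))
          + ∑ s ∈ range r, u * ((-1 : ℂ) ^ (r - s) * (r.choose s)) *
              ((n : ℂ) ^ r * ∑ i ∈ range r, ((n : ℂ)⁻¹) ^ i *
                (if r - s ≤ i then (aeval u (g' s (i - (r - s))) : ℂ) else 0)) := by
          rw [Finset.sum_congr rfl fun i _ => congrArg (((n : ℂ)⁻¹) ^ i * ·) (haeval i)]
          rw [Finset.sum_congr rfl fun i (_ : i ∈ range r) => (by
            rw [mul_add, Finset.mul_sum]
            exact congrArg₂ (· + ·) (by ring)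
              (Finset.sum_congr rfl fun s _ => by ring) :
            ((n : ℂ)⁻¹) ^ i * (((-1 : ℂ) ^ i * (r.choose (r - i))) * u
              + ∑ s ∈ range r, ((-1 : ℂ) ^ (r - s) * (r.choose s)) *
                  (u * (if r - s ≤ i then (aeval u (g' s (i - (r - s))) : ℂ) else 0)))
            = u * (((n : ℂ)⁻¹) ^ i * ((-1 : ℂ) ^ i * (r.choose (r - i))))
              + ∑ s ∈ range r, u * ((-1 : ℂ) ^ (r - s) * (r.choose s)) *
                  (((n : ℂ)⁻¹) ^ i *
                    (if r - s ≤ i then (aeval u (g' s (i - (r - s))) : ℂ) else 0)))]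
          rw [Finset.sum_add_distrib, mul_add, Finset.sum_comm]
          congr 1
          · rw [← Finset.mul_sum, ← mul_assoc, mul_comm ((n : ℂ) ^ r) u, mul_assoc]
          · rw [Finset.mul_sum]
            refine Finset.sum_congr rfl fun s _ => ?_
            rw [← Finset.mul_sum, Finset.mul_sum, ← Finset.mul_sum]
            ring
      _ = u * (((n : ℂ) - 1) ^ r - (-1) ^ r)
          + ∑ s ∈ range r, u * ((-1 : ℂ) ^ (r - s) * (r.choose s)) * T s := by
          congr 1
          · rw [claim1 r _ hne]
          · refine Finset.sum_congr rfl fun s hs => ?_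
            have hs' := Finset.mem_range.1 hs
            have c2 := claim2 r s hs' (n : ℂ) hne (fun j => (aeval u (g' s j) : ℂ))
            beta_reduce at c2
            rw [c2, hgT s hs']
      _ = u * (((n : ℂ) - 1) ^ r - (-1) ^ r
          + ∑ s ∈ range r, (-1 : ℂ) ^ (r - s) * (r.choose s) * T s) := by
          rw [mul_add, Finset.mul_sum]
          exact congrArg₂ (· + ·) rfl (Finset.sum_congr rfl fun s _ => by ring)
  rw [main, ← key_rec r n x hx, hudef, inv_mul_cancel_left₀ hu]

lemma natDegree_bernoulli_le (n : ℕ) : (Polynomial.bernoulli n).natDegree ≤ n := by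
  rw [Polynomial.bernoulli]
  refine Polynomial.natDegree_sum_le_of_forall_le _ _ fun i hi => ?_
  exact (Polynomial.natDegree_monomial_le _).trans (Nat.sub_le _ _)

lemma cast_prod_eval (L : List ℕ) (y : ℚ) :
    (L.map fun mm => (((Polynomial.bernoulli mm).eval y : ℚ) : ℂ)).prod
      = (((L.map Polynomial.bernoulli).prod.eval y : ℚ) : ℂ) := by
  induction L with
  | nil => simp
  | cons a L ih => simp [ih]

/-- Lemma 23: with `m = m_1 + ⋯ + m_k` there are polynomials `f_0,…,f_{m-1}` with rational
coefficients, depending only on `m_1,…,m_k`, such that for all `n ≥ 1` and `1 ≤ b ≤ n-1`,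
`β_{m_1,…,m_k}(n,b) = ∑_{i=0}^{m-1} (1/n)^i · f_i(1/(ζ_n^b − 1))`. -/
theorem betaB_eq_poly_of_alpha (M : List ℕ) :
    ∃ f : ℕ → Polynomial ℚ,
      ∀ n : ℕ, 0 < n → ∀ b : ℕ, 1 ≤ b → b ≤ n - 1 →
        betaB M n (b : ℤ) =
          ∑ i ∈ Finset.range M.sum,
            ((1 : ℂ) / (n : ℂ)) ^ i * Polynomial.aeval (1 / (zeta n ^ b - 1)) (f i) := by
  choose H hH using fun r => lemA r
  set m := M.sum with hm
  set P : Polynomial ℚ := (M.map Polynomial.bernoulli).prod with hPdef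
  have hdeg : P.natDegree < m + 1 := by
    refine Nat.lt_succ_of_le ?_
    refine (Polynomial.natDegree_list_prod_le _).trans ?_
    rw [List.map_map]
    calc ((M.map (Polynomial.natDegree ∘ Polynomial.bernoulli))).sum
        ≤ (M.map id).sum := by
          refine List.sum_le_sum fun mm hmm => ?_
          simpa using natDegree_bernoulli_le mm
      _ = m := by rw [List.map_id]
  refine ⟨fun i => ∑ r ∈ range (m + 1), Polynomial.C (P.coeff r) *
    (if i < r then H r i else 0), ?_⟩
  intro n hn b hb1 hb2
  have hbn : b < n := by omega
  have hprim : IsPrimitiveRoot (zeta n) n := Complex.isPrimitiveRoot_exp n hn.ne'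
  set x : ℂ := zeta n ^ b with hxdef
  have hxn : x ^ n = 1 := by
    rw [hxdef, ← pow_mul, mul_comm, pow_mul, hprim.pow_eq_one, one_pow]
  have hx1 : x ≠ 1 := hprim.pow_ne_one_of_pos_of_lt (by omega) hbn
  have hne : (n : ℂ) ≠ 0 := Nat.cast_ne_zero.2 hn.ne'
  simp only [one_div]
  -- step 1
  have hz : ∀ a : ℕ, zeta n ^ ((a : ℤ) * (b : ℤ)) = x ^ a := by
    intro a
    rw [show ((a : ℤ) * (b : ℤ)) = ((b * a : ℕ) : ℤ) by push_cast; ring, zpow_natCast,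
      pow_mul, hxdef]
  have hprod : ∀ a : ℕ,
      ((M.map fun mm => (((Polynomial.bernoulli mm).eval ((a : ℚ) / (n : ℚ)) : ℚ) : ℂ)).prod)
        = ∑ r ∈ range (m + 1), (P.coeff r : ℂ) * ((a : ℂ) / (n : ℂ)) ^ r := by
    intro a
    rw [cast_prod_eval, ← hPdef, Polynomial.eval_eq_sum_range' hdeg]
    push_cast
    rfl
  have step1 : betaB M n (b : ℤ) = ∑ r ∈ range (m + 1), (P.coeff r : ℂ) *
      (((n : ℂ)⁻¹) ^ r * ∑ a ∈ range n, (a : ℂ) ^ r * x ^ a) := by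
    rw [betaB]
    rw [Finset.sum_congr rfl fun a _ => by rw [hz a, hprod a, Finset.mul_sum]]
    rw [Finset.sum_comm]
    refine Finset.sum_congr rfl fun r _ => ?_
    rw [Finset.mul_sum, Finset.mul_sum]
    refine Finset.sum_congr rfl fun a _ => ?_
    rw [div_pow]
    field_simp
    rw [one_div, inv_pow, mul_inv_cancel_right₀ (pow_ne_zero _ hne)]
  -- step 2 : apply lemA and cancel powers of n
  have step2 : betaB M n (b : ℤ) = ∑ r ∈ range (m + 1), (P.coeff r : ℂ) *
      ∑ i ∈ range r, ((n : ℂ)⁻¹) ^ i * aeval (x - 1)⁻¹ (H r i) := by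
    rw [step1]
    refine Finset.sum_congr rfl fun r _ => ?_
    have hcan : ((n : ℂ)⁻¹) ^ r * ((n : ℂ) ^ r * (∑ i ∈ range r, ((n : ℂ)⁻¹) ^ i *
        aeval (x - 1)⁻¹ (H r i))) = ∑ i ∈ range r, ((n : ℂ)⁻¹) ^ i * aeval (x - 1)⁻¹ (H r i) := by
      rw [inv_pow, inv_mul_cancel_left₀ (pow_ne_zero _ hne)]
    rw [hH r n x hn hxn hx1, hcan]
  rw [step2]
  -- step 3 : extend inner sums to range m and swap
  have ext : ∀ r ∈ range (m + 1),
      ∑ i ∈ range r, ((n : ℂ)⁻¹) ^ i * aeval (x - 1)⁻¹ (H r i)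
        = ∑ i ∈ range m, ((n : ℂ)⁻¹) ^ i * (if i < r then (aeval (x - 1)⁻¹ (H r i) : ℂ) else 0) := by
    intro r hr
    have hrm : r ≤ m := Nat.lt_succ_iff.1 (Finset.mem_range.1 hr)
    rw [← Finset.sum_subset (Finset.range_subset_range.2 hrm)
      (fun i _ hi => by rw [if_neg (by simpa using hi), mul_zero])]
    exact Finset.sum_congr rfl fun i hi => by rw [if_pos (Finset.mem_range.1 hi)]
  rw [Finset.sum_congr rfl fun r hr => congrArg (HMul.hMul ((P.coeff r : ℂ))) (ext r hr)]
  rw [Finset.sum_congr rfl fun r (_ : r ∈ range (m+1)) => Finset.mul_sum (range m) _ _]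
  rw [Finset.sum_comm]
  refine Finset.sum_congr rfl fun i _ => ?_
  rw [map_sum, Finset.mul_sum]
  refine Finset.sum_congr rfl fun r _ => ?_
  rw [map_mul, Polynomial.aeval_C, apply_ite (Polynomial.aeval ((x - 1)⁻¹ : ℂ)), map_zero,
    eq_ratCast (algebraMap ℚ ℂ)]
  ring
end
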